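/- arXiv:1403.2674 — 2 statements merged into one kernel-verified Lean document; each statement's English description precedes it below -/
import Mathlib

section
/- In a maximally bilocal-tomographic theory, the four-partite dimension satisfies D_{ABCD} = D_{AB}·D_{CD} + D_A·D_{BD}·D_C + D_{AD}·D_B·D_C + D_A·D_{BC}·D_D + D_{AC}·D_B·D_D − 4·D_A·D_B·D_C·D_D. -/
/-- In a maximally bilocal-tomographic theory the four-partite dimension is
determined by the single- and bipartite dimensions. The maximal
bilocal-tomography identity `D_{XYZ} = D_X D_Y D_Z + D_X D̃_{YZ} + D_Y D̃_{XZ}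
+ D_Z D̃_{XY}` is assumed for the tripartitions of A, B, C, D and for the
tripartition `(AB)CD` where the composite `AB` is treated as a single system. -/
theorem maximally_bilocal_four_partite
    (DA DB DC DD DAB DAC DAD DBC DBD DCD DABC DABD DACD DBCD DABCD : ℝ)
    (hABC : DABC = DA * DB * DC + DA * (DBC - DB * DC) + DB * (DAC - DA * DC)
        + DC * (DAB - DA * DB))
    (hABD : DABD = DA * DB * DD + DA * (DBD - DB * DD) + DB * (DAD - DA * DD)
        + DD * (DAB - DA * DB))
    (hACD : DACD = DA * DC * DD + DA * (DCD - DC * DD) + DC * (DAD - DA * DD)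
        + DD * (DAC - DA * DC))
    (hBCD : DBCD = DB * DC * DD + DB * (DCD - DC * DD) + DC * (DBD - DB * DD)
        + DD * (DBC - DB * DC))
    (hAB_CD : DABCD = DAB * DC * DD + DAB * (DCD - DC * DD)
        + DC * (DABD - DAB * DD) + DD * (DABC - DAB * DC)) :
    DABCD = DAB * DCD + DA * DBD * DC + DAD * DB * DC + DA * DBC * DD
      + DAC * DB * DD - 4 * (DA * DB * DC * DD) := by
  subst hABC hABD; subst hAB_CD; ring
end

section
/- The two-qubit state Φ = ¼(I⊗I + σ^x⊗σ^x) satisfies Tr[Φ·(σ^x⊗σ^x)] = 1 ≠ 0; hence Φ is not diagonal in the computational basis and therefore not separable as a Fermionic state, even though Φ = ½|Π₊⟩⟨Π₊| + ½|Π₋⟩⟨Π₋| with |Π_±⟩ = |±⟩⊗|±⟩, so Φ is separable as a two-qubit quantum state. -/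
open Matrix Kronecker

noncomputable section

def σx : Matrix (Fin 2) (Fin 2) ℂ := !![0, 1; 1, 0]

/-- `Φ = ¼(I⊗I + σ^x⊗σ^x)`. -/
def Φ : Matrix (Fin 2 × Fin 2) (Fin 2 × Fin 2) ℂ :=
  (1 / 4 : ℂ) • ((1 : Matrix (Fin 2 × Fin 2) (Fin 2 × Fin 2) ℂ) + σx ⊗ₖ σx)

/-- `|+⟩ = (|0⟩+|1⟩)/√2`. -/
def plus : Fin 2 → ℂ := fun _ => (1 / Real.sqrt 2 : ℝ)
/-- `|−⟩ = (|0⟩−|1⟩)/√2`. -/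
def minus : Fin 2 → ℂ := fun i => if i = 0 then ((1 / Real.sqrt 2 : ℝ) : ℂ)
  else -((1 / Real.sqrt 2 : ℝ) : ℂ)

/-- `|Π₊⟩ = |+⟩⊗|+⟩`. -/
def piPlus : Fin 2 × Fin 2 → ℂ := fun i => plus i.1 * plus i.2
/-- `|Π₋⟩ = |−⟩⊗|−⟩`. -/
def piMinus : Fin 2 × Fin 2 → ℂ := fun i => minus i.1 * minus i.2

/-- `Tr[Φ(σ^x⊗σ^x)] = 1 ≠ 0`, hence `Φ` is not diagonal in the computational
basis and so not separable as a Fermionic state, even though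
`Φ = ½(|Π₊⟩⟨Π₊| + |Π₋⟩⟨Π₋|)` is separable as a two-qubit quantum state. -/
theorem phi_not_fermionic_separable :
    (Φ * (σx ⊗ₖ σx)).trace = 1 ∧ (1 : ℂ) ≠ 0 ∧
    ¬(∀ i j : Fin 2 × Fin 2, i ≠ j → Φ i j = 0) ∧
    Φ = (1 / 2 : ℂ) •
      (Matrix.vecMulVec piPlus (star piPlus) + Matrix.vecMulVec piMinus (star piMinus)) := by
  have h2 : ((Real.sqrt 2 : ℝ) : ℂ) * ((Real.sqrt 2 : ℝ) : ℂ) = 2 := by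
    rw [← Complex.ofReal_mul, Real.mul_self_sqrt (by norm_num)]
    norm_num
  refine ⟨?_, one_ne_zero, ?_, ?_⟩
  · simp only [Φ, σx, trace, diag, Matrix.mul_apply, Fin.sum_univ_two,
      Fintype.sum_prod_type, Matrix.smul_apply, Matrix.add_apply, one_apply, kroneckerMap_apply,
      Matrix.cons_val', Matrix.cons_val_zero, Matrix.cons_val_one, Matrix.head_cons,
      Matrix.head_fin_const, Matrix.empty_val']
    norm_num
  · intro h
    have := h (0, 0) (1, 1) (by decide)
    simp [Φ, σx, one_apply] at this
  · ext ⟨i, j⟩ ⟨k, l⟩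
    fin_cases i <;> fin_cases j <;> fin_cases k <;> fin_cases l <;>
      simp [Φ, σx, piPlus, piMinus, plus, minus, vecMulVec_apply, one_apply,
        _root_.map_mul, ← Complex.ofReal_div] <;>
      first
        | decide
        | (field_simp; ring_nf;
           rw [show ((Real.sqrt 2 : ℝ) : ℂ) ^ 4 =
             (((Real.sqrt 2:ℝ):ℂ) * ((Real.sqrt 2:ℝ):ℂ)) *
             (((Real.sqrt 2:ℝ):ℂ) * ((Real.sqrt 2:ℝ):ℂ)) from by ring, h2];
           norm_num)

end
end
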